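/- arXiv:2011.13461 — 3 statements merged into one kernel-verified Lean document; each statement's English description precedes it below -/
import Mathlib

section
/- With the factorization P₄ = K₁K₂ of the preceding context, if additionally H equals the reduced Hessian L_zz := R_zᵀ R_u⁻ᵀ L_uu R_u⁻¹ R_z − R_zᵀ R_u⁻ᵀ L_uz − L_zu R_u⁻¹ R_z + L_zz^{dd} (with (2,2) Hessian block L_zz^{dd}), then K₁K₂ equals the full KKT matrix K = [[L_uu, L_uz, R_uᵀ], [L_zu, L_zz^{dd}, R_zᵀ], [R_u, R_z, 0]]. -/
open Matrix

/-- Assemble a 3×3 block matrix with row/column block sizes (n, m, n). -/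
def blk3 {n m : ℕ}
    (A11 : Matrix (Fin n) (Fin n) ℝ) (A12 : Matrix (Fin n) (Fin m) ℝ) (A13 : Matrix (Fin n) (Fin n) ℝ)
    (A21 : Matrix (Fin m) (Fin n) ℝ) (A22 : Matrix (Fin m) (Fin m) ℝ) (A23 : Matrix (Fin m) (Fin n) ℝ)
    (A31 : Matrix (Fin n) (Fin n) ℝ) (A32 : Matrix (Fin n) (Fin m) ℝ) (A33 : Matrix (Fin n) (Fin n) ℝ) :
    Matrix ((Fin n ⊕ Fin m) ⊕ Fin n) ((Fin n ⊕ Fin m) ⊕ Fin n) ℝ :=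
  Matrix.fromBlocks (Matrix.fromBlocks A11 A12 A21 A22) (Matrix.fromRows A13 A23)
    (Matrix.fromCols A31 A32) A33

/-- If `H` equals the exact reduced Hessian, the factorization `K₁K₂` recovers the full
KKT matrix. -/
theorem stmt_3 {n m : ℕ} (Ru : Matrix (Fin n) (Fin n) ℝ) (Rz : Matrix (Fin n) (Fin m) ℝ)
    (Luu : Matrix (Fin n) (Fin n) ℝ) (Luz : Matrix (Fin n) (Fin m) ℝ)
    (Lzu : Matrix (Fin m) (Fin n) ℝ) (Ldd : Matrix (Fin m) (Fin m) ℝ)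
    (H : Matrix (Fin m) (Fin m) ℝ)
    (hRu : IsUnit Ru) (hLzu : Lzu = Luzᵀ)
    (hH : H = Rzᵀ * (Ruᵀ)⁻¹ * Luu * Ru⁻¹ * Rz - Rzᵀ * (Ruᵀ)⁻¹ * Luz - Lzu * Ru⁻¹ * Rz + Ldd) :
    (blk3 (Luu * Ru⁻¹) 0 1 (Lzu * Ru⁻¹) 1 (Rzᵀ * (Ruᵀ)⁻¹) 1 0 0) *
      (blk3 Ru Rz 0 0 H 0 0 (Luz - Luu * Ru⁻¹ * Rz) Ruᵀ) =
    blk3 Luu Luz Ruᵀ Lzu Ldd Rzᵀ Ru Rz 0 := by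
  have hdet : IsUnit Ru.det := (Matrix.isUnit_iff_isUnit_det Ru).mp hRu
  have h1 : Ru⁻¹ * Ru = 1 := Matrix.nonsing_inv_mul Ru hdet
  have h2 : (Ruᵀ)⁻¹ * Ruᵀ = 1 := Matrix.nonsing_inv_mul Ruᵀ (by simpa using hdet)
  simp only [blk3, Matrix.fromBlocks_multiply, Matrix.fromBlocks_mul_fromRows,
    Matrix.fromCols_mul_fromBlocks, Matrix.fromCols_mul_fromRows,
    Matrix.mul_fromCols, Matrix.fromRows_mul]
  rw [hH]
  simp only [Matrix.fromCols_fromRows_eq_fromBlocks, Matrix.fromBlocks_add,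
    Matrix.mul_zero, Matrix.zero_mul,
    Matrix.one_mul, Matrix.mul_one, add_zero, zero_add,
    Matrix.mul_assoc, h1, h2]
  simp only [Matrix.fromRows_zero, Matrix.fromCols_zero, zero_add, add_zero]
  rw [Matrix.fromBlocks_inj, Matrix.fromBlocks_inj]
  refine ⟨⟨rfl, ?_, rfl, ?_⟩, rfl, rfl, rfl⟩ <;>
    (try simp only [Matrix.mul_assoc, Matrix.mul_sub]) <;> abel
end

section
/- Let K = [[L_uu, L_uz, R_uᵀ], [L_zu, L_dd, R_zᵀ], [R_u, R_z, 0]] be the KKT matrix with R_u invertible, and let P₄ = K₁K₂ with approximate reduced Hessian H invertible. Then P₄⁻¹K = [[I_n, R_u⁻¹R_z(I_m − H⁻¹L_zz), 0], [0, H⁻¹L_zz, 0], [0, R_u⁻ᵀL_yy(I_m − H⁻¹L_zz), I_n]], where L_yy = L_uz − L_uu R_u⁻¹ R_z and L_zz = R_zᵀR_u⁻ᵀL_uu R_u⁻¹R_z − R_zᵀR_u⁻ᵀL_uz − L_zu R_u⁻¹R_z + L_dd is the exact reduced Hessian. -/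
open Matrix

lemma blk3_mul {n m : ℕ}
    (A11 : Matrix (Fin n) (Fin n) ℝ) (A12 : Matrix (Fin n) (Fin m) ℝ) (A13 : Matrix (Fin n) (Fin n) ℝ)
    (A21 : Matrix (Fin m) (Fin n) ℝ) (A22 : Matrix (Fin m) (Fin m) ℝ) (A23 : Matrix (Fin m) (Fin n) ℝ)
    (A31 : Matrix (Fin n) (Fin n) ℝ) (A32 : Matrix (Fin n) (Fin m) ℝ) (A33 : Matrix (Fin n) (Fin n) ℝ)
    (B11 : Matrix (Fin n) (Fin n) ℝ) (B12 : Matrix (Fin n) (Fin m) ℝ) (B13 : Matrix (Fin n) (Fin n) ℝ)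
    (B21 : Matrix (Fin m) (Fin n) ℝ) (B22 : Matrix (Fin m) (Fin m) ℝ) (B23 : Matrix (Fin m) (Fin n) ℝ)
    (B31 : Matrix (Fin n) (Fin n) ℝ) (B32 : Matrix (Fin n) (Fin m) ℝ) (B33 : Matrix (Fin n) (Fin n) ℝ) :
    blk3 A11 A12 A13 A21 A22 A23 A31 A32 A33 * blk3 B11 B12 B13 B21 B22 B23 B31 B32 B33 =
    blk3 (A11*B11 + A12*B21 + A13*B31) (A11*B12 + A12*B22 + A13*B32) (A11*B13 + A12*B23 + A13*B33)
         (A21*B11 + A22*B21 + A23*B31) (A21*B12 + A22*B22 + A23*B32) (A21*B13 + A22*B23 + A23*B33)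
         (A31*B11 + A32*B21 + A33*B31) (A31*B12 + A32*B22 + A33*B32) (A31*B13 + A32*B23 + A33*B33) := by
  ext i j
  rcases i with (i|i)|i <;> rcases j with (j|j)|j <;>
    simp [blk3, Matrix.mul_apply, Fintype.sum_sum_type, Matrix.fromBlocks, Matrix.fromRows_apply_inl, Matrix.fromRows_apply_inr,
      Matrix.fromCols, Finset.sum_add_distrib]

lemma blk3_one {n m : ℕ} : (blk3 (n := n) (m := m) 1 0 0 0 1 0 0 0 1) = 1 := by
  ext i j
  rcases i with (i|i)|i <;> rcases j with (j|j)|j <;>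
    simp [blk3, Matrix.fromBlocks, Matrix.fromRows_apply_inl, Matrix.fromRows_apply_inr, Matrix.fromCols, Matrix.one_apply]

lemma blk3_ext {n m : ℕ}
    {A11 B11 : Matrix (Fin n) (Fin n) ℝ} {A12 B12 : Matrix (Fin n) (Fin m) ℝ} {A13 B13 : Matrix (Fin n) (Fin n) ℝ}
    {A21 B21 : Matrix (Fin m) (Fin n) ℝ} {A22 B22 : Matrix (Fin m) (Fin m) ℝ} {A23 B23 : Matrix (Fin m) (Fin n) ℝ}
    {A31 B31 : Matrix (Fin n) (Fin n) ℝ} {A32 B32 : Matrix (Fin n) (Fin m) ℝ} {A33 B33 : Matrix (Fin n) (Fin n) ℝ}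
    (e11 : A11 = B11) (e12 : A12 = B12) (e13 : A13 = B13)
    (e21 : A21 = B21) (e22 : A22 = B22) (e23 : A23 = B23)
    (e31 : A31 = B31) (e32 : A32 = B32) (e33 : A33 = B33) :
    blk3 A11 A12 A13 A21 A22 A23 A31 A32 A33 = blk3 B11 B12 B13 B21 B22 B23 B31 B32 B33 := by
  rw [e11, e12, e13, e21, e22, e23, e31, e32, e33]

set_option maxHeartbeats 1000000 in
/-- Corrected form of the `P₄`-preconditioned KKT system `P₄⁻¹ K` where `P₄ = K₁K₂`,
`L_yy = L_uz − L_uu R_u⁻¹ R_z`, and `L_zz` is the exact reduced Hessian. -/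
theorem stmt_6 {n m : ℕ} (Ru : Matrix (Fin n) (Fin n) ℝ) (Rz : Matrix (Fin n) (Fin m) ℝ)
    (H : Matrix (Fin m) (Fin m) ℝ) (Luu : Matrix (Fin n) (Fin n) ℝ)
    (Luz : Matrix (Fin n) (Fin m) ℝ) (Lzu : Matrix (Fin m) (Fin n) ℝ)
    (Ldd : Matrix (Fin m) (Fin m) ℝ)
    (hRu : IsUnit Ru) (hH : IsUnit H) (hLzu : Lzu = Luzᵀ) :
    ((blk3 (Luu * Ru⁻¹) 0 1 (Lzu * Ru⁻¹) 1 (Rzᵀ * (Ruᵀ)⁻¹) 1 0 0) *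
        (blk3 Ru Rz 0 0 H 0 0 (Luz - Luu * Ru⁻¹ * Rz) Ruᵀ))⁻¹ *
      (blk3 Luu Luz Ruᵀ Lzu Ldd Rzᵀ Ru Rz 0) =
    blk3 1 (Ru⁻¹ * Rz * (1 - H⁻¹ * (Rzᵀ * (Ruᵀ)⁻¹ * Luu * Ru⁻¹ * Rz - Rzᵀ * (Ruᵀ)⁻¹ * Luz - Lzu * Ru⁻¹ * Rz + Ldd))) 0
         0 (H⁻¹ * (Rzᵀ * (Ruᵀ)⁻¹ * Luu * Ru⁻¹ * Rz - Rzᵀ * (Ruᵀ)⁻¹ * Luz - Lzu * Ru⁻¹ * Rz + Ldd)) 0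
         0 ((Ruᵀ)⁻¹ * (Luz - Luu * Ru⁻¹ * Rz) * (1 - H⁻¹ * (Rzᵀ * (Ruᵀ)⁻¹ * Luu * Ru⁻¹ * Rz - Rzᵀ * (Ruᵀ)⁻¹ * Luz - Lzu * Ru⁻¹ * Rz + Ldd))) 1 := by
  have hRud : IsUnit Ru.det := (Matrix.isUnit_iff_isUnit_det _).mp hRu
  have hHd : IsUnit H.det := (Matrix.isUnit_iff_isUnit_det _).mp hH
  have hRutd : IsUnit Ruᵀ.det := by simpa [Matrix.det_transpose] using hRud
  have h1 : Ru⁻¹ * Ru = 1 := Matrix.nonsing_inv_mul _ hRud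
  have h2 : Ru * Ru⁻¹ = 1 := Matrix.mul_nonsing_inv _ hRud
  have h3 : (Ruᵀ)⁻¹ * Ruᵀ = 1 := Matrix.nonsing_inv_mul _ hRutd
  have h4 : Ruᵀ * (Ruᵀ)⁻¹ = 1 := Matrix.mul_nonsing_inv _ hRutd
  have h5 : H⁻¹ * H = 1 := Matrix.nonsing_inv_mul _ hHd
  have h6 : H * H⁻¹ = 1 := Matrix.mul_nonsing_inv _ hHd
  have h1' : ∀ {k : ℕ} (X : Matrix (Fin n) (Fin k) ℝ), Ru⁻¹ * (Ru * X) = X := fun X => by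
    rw [← Matrix.mul_assoc, h1, Matrix.one_mul]
  have h2' : ∀ {k : ℕ} (X : Matrix (Fin n) (Fin k) ℝ), Ru * (Ru⁻¹ * X) = X := fun X => by
    rw [← Matrix.mul_assoc, h2, Matrix.one_mul]
  have h3' : ∀ {k : ℕ} (X : Matrix (Fin n) (Fin k) ℝ), (Ruᵀ)⁻¹ * (Ruᵀ * X) = X := fun X => by
    rw [← Matrix.mul_assoc, h3, Matrix.one_mul]
  have h4' : ∀ {k : ℕ} (X : Matrix (Fin n) (Fin k) ℝ), Ruᵀ * ((Ruᵀ)⁻¹ * X) = X := fun X => by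
    rw [← Matrix.mul_assoc, h4, Matrix.one_mul]
  have h5' : ∀ {k : ℕ} (X : Matrix (Fin m) (Fin k) ℝ), H⁻¹ * (H * X) = X := fun X => by
    rw [← Matrix.mul_assoc, h5, Matrix.one_mul]
  have h6' : ∀ {k : ℕ} (X : Matrix (Fin m) (Fin k) ℝ), H * (H⁻¹ * X) = X := fun X => by
    rw [← Matrix.mul_assoc, h6, Matrix.one_mul]
  set Lyy : Matrix (Fin n) (Fin m) ℝ := Luz - Luu * Ru⁻¹ * Rz with hLyy
  set Lzz : Matrix (Fin m) (Fin m) ℝ :=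
    Rzᵀ * (Ruᵀ)⁻¹ * Luu * Ru⁻¹ * Rz - Rzᵀ * (Ruᵀ)⁻¹ * Luz - Lzu * Ru⁻¹ * Rz + Ldd with hLzz
  set K₁ := blk3 (Luu * Ru⁻¹) 0 1 (Lzu * Ru⁻¹) 1 (Rzᵀ * (Ruᵀ)⁻¹) 1 0 0 with hK1
  set K₂ := blk3 Ru Rz 0 0 H 0 0 Lyy Ruᵀ with hK2
  set M₁ := blk3 0 0 1 (-(Rzᵀ * (Ruᵀ)⁻¹)) 1 (Rzᵀ * (Ruᵀ)⁻¹ * Luu * Ru⁻¹ - Lzu * Ru⁻¹)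
      1 0 (-(Luu * Ru⁻¹)) with hM1
  set M₂ := blk3 Ru⁻¹ (-(Ru⁻¹ * Rz * H⁻¹)) 0 0 H⁻¹ 0 0 (-((Ruᵀ)⁻¹ * Lyy * H⁻¹)) (Ruᵀ)⁻¹ with hM2
  have hM1K1 : M₁ * K₁ = 1 := by
    rw [hM1, hK1, blk3_mul, ← blk3_one]
    apply blk3_ext <;>
      simp only [Matrix.zero_mul, Matrix.mul_zero, Matrix.one_mul, Matrix.mul_one,
        add_zero, zero_add, Matrix.neg_mul, Matrix.sub_mul, Matrix.mul_sub,
        Matrix.add_mul, Matrix.mul_add, Matrix.mul_assoc, h1, h2, h3, h4, h5, h6,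
        h1', h2', h3', h4', h5', h6'] <;> abel
  have hM2K2 : M₂ * K₂ = 1 := by
    rw [hM2, hK2, blk3_mul, ← blk3_one]
    apply blk3_ext <;>
      simp only [hLyy, Matrix.zero_mul, Matrix.mul_zero, Matrix.one_mul, Matrix.mul_one,
        add_zero, zero_add, Matrix.neg_mul, Matrix.sub_mul, Matrix.mul_sub,
        Matrix.add_mul, Matrix.mul_add, Matrix.mul_assoc, h1, h2, h3, h4, h5, h6,
        h1', h2', h3', h4', h5', h6'] <;> abel
  have hP : K₁ * K₂ = blk3 Luu Luz Ruᵀ Lzu (H + Ldd - Lzz) Rzᵀ Ru Rz 0 := by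
    rw [hK1, hK2, blk3_mul]
    apply blk3_ext <;>
      simp only [hLyy, hLzz, Matrix.zero_mul, Matrix.mul_zero, Matrix.one_mul, Matrix.mul_one,
        add_zero, zero_add, Matrix.neg_mul, Matrix.sub_mul, Matrix.mul_sub,
        Matrix.add_mul, Matrix.mul_add, Matrix.mul_assoc, h1, h2, h3, h4, h5, h6,
        h1', h2', h3', h4', h5', h6'] <;> abel
  have hPRHS : (K₁ * K₂) *
      blk3 1 (Ru⁻¹ * (Rz * (1 - H⁻¹ * Lzz))) 0 0 (H⁻¹ * Lzz) 0
        0 ((Ruᵀ)⁻¹ * (Lyy * (1 - H⁻¹ * Lzz))) 1 =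
      blk3 Luu Luz Ruᵀ Lzu Ldd Rzᵀ Ru Rz 0 := by
    rw [hP, blk3_mul]
    apply blk3_ext <;>
      simp only [hLyy, hLzz, Matrix.zero_mul, Matrix.mul_zero, Matrix.one_mul, Matrix.mul_one,
        add_zero, zero_add, Matrix.neg_mul, Matrix.sub_mul, Matrix.mul_sub,
        Matrix.add_mul, Matrix.mul_add, Matrix.mul_assoc, h1, h2, h3, h4, h5, h6,
        h1', h2', h3', h4', h5', h6'] <;> abel
  have hMP : (M₂ * M₁) * (K₁ * K₂) = 1 := by
    rw [Matrix.mul_assoc, ← Matrix.mul_assoc M₁, hM1K1, Matrix.one_mul, hM2K2]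
  have hinv : (K₁ * K₂)⁻¹ = M₂ * M₁ := Matrix.inv_eq_left_inv hMP
  have hRw1 : Ru⁻¹ * Rz * (1 - H⁻¹ * Lzz) = Ru⁻¹ * (Rz * (1 - H⁻¹ * Lzz)) := by
    rw [Matrix.mul_assoc]
  have hRw2 : (Ruᵀ)⁻¹ * Lyy * (1 - H⁻¹ * Lzz) = (Ruᵀ)⁻¹ * (Lyy * (1 - H⁻¹ * Lzz)) := by
    rw [Matrix.mul_assoc]
  rw [hinv, hRw1, hRw2, ← hPRHS, ← Matrix.mul_assoc, hMP, Matrix.one_mul]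
end

section
/- Let K = [[L_uu, L_uz, R_uᵀ], [L_uzᵀ, L_dd, R_zᵀ], [R_u, R_z, 0]] with R_u invertible and L blocks forming a symmetric Hessian. Then K is invertible if and only if the reduced Hessian L_zz = L_dd + R_zᵀR_u⁻ᵀL_uu R_u⁻¹R_z − R_zᵀR_u⁻ᵀL_uz − L_uzᵀR_u⁻¹R_z is invertible. -/
open Matrix

/-- The KKT matrix `K` with `R_u` invertible and symmetric Hessian blocks is invertible
iff the reduced Hessian `L_zz` is invertible. -/
theorem stmt_17 {n m : ℕ} (Ru : Matrix (Fin n) (Fin n) ℝ) (Rz : Matrix (Fin n) (Fin m) ℝ)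
    (Luu : Matrix (Fin n) (Fin n) ℝ) (Luz : Matrix (Fin n) (Fin m) ℝ)
    (Ldd : Matrix (Fin m) (Fin m) ℝ)
    (hRu : IsUnit Ru) (hLuu : Luuᵀ = Luu) (hLdd : Lddᵀ = Ldd) :
    IsUnit (blk3 Luu Luz Ruᵀ Luzᵀ Ldd Rzᵀ Ru Rz 0) ↔
      IsUnit (Ldd + Rzᵀ * (Ruᵀ)⁻¹ * Luu * Ru⁻¹ * Rz - Rzᵀ * (Ruᵀ)⁻¹ * Luz - Luzᵀ * Ru⁻¹ * Rz) := by
  have hdet : IsUnit Ru.det := (Matrix.isUnit_iff_isUnit_det Ru).mp hRu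
  have hRuinv : Ru * Ru⁻¹ = 1 := Matrix.mul_nonsing_inv Ru hdet
  have hinvRu : Ru⁻¹ * Ru = 1 := Matrix.nonsing_inv_mul Ru hdet
  have hT : (Ruᵀ)⁻¹ = (Ru⁻¹)ᵀ := (Matrix.transpose_nonsing_inv Ru).symm
  have hRuTinv : Ruᵀ * (Ruᵀ)⁻¹ = 1 := by
    rw [hT, ← Matrix.transpose_mul, hinvRu, Matrix.transpose_one]
  have hinvRuT : (Ruᵀ)⁻¹ * Ruᵀ = 1 := by
    rw [hT, ← Matrix.transpose_mul, hRuinv, Matrix.transpose_one]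
  -- the invertible (u, λ) block
  set A : Matrix (Fin n ⊕ Fin n) (Fin n ⊕ Fin n) ℝ := fromBlocks Luu Ruᵀ Ru 0 with hA
  set Ainv : Matrix (Fin n ⊕ Fin n) (Fin n ⊕ Fin n) ℝ :=
    fromBlocks 0 Ru⁻¹ (Ruᵀ)⁻¹ (-((Ruᵀ)⁻¹ * Luu * Ru⁻¹)) with hAi
  have hmul' : Ainv * A = 1 := by
    rw [hA, hAi, Matrix.fromBlocks_multiply]
    simp [hinvRuT, Matrix.mul_assoc, hinvRu]
  have hmul : A * Ainv = 1 := by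
    rw [hA, hAi, Matrix.fromBlocks_multiply]
    simp [hRuTinv, Matrix.mul_assoc, hRuinv]
    rw [← Matrix.mul_assoc Ruᵀ (Ruᵀ)⁻¹ (Luu * Ru⁻¹), hRuTinv, Matrix.one_mul]
    simp [Matrix.fromBlocks_one]
  have hAinst : Invertible A := ⟨Ainv, hmul', hmul⟩
  set B : Matrix (Fin n ⊕ Fin n) (Fin m) ℝ := fromRows Luz Rz with hB
  set C : Matrix (Fin m) (Fin n ⊕ Fin n) ℝ := fromCols Luzᵀ Rzᵀ with hC
  set e : ((Fin n ⊕ Fin n) ⊕ Fin m) ≃ ((Fin n ⊕ Fin m) ⊕ Fin n) :=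
    { toFun := fun x => match x with
        | Sum.inl (Sum.inl i) => Sum.inl (Sum.inl i)
        | Sum.inl (Sum.inr i) => Sum.inr i
        | Sum.inr k => Sum.inl (Sum.inr k)
      invFun := fun x => match x with
        | Sum.inl (Sum.inl i) => Sum.inl (Sum.inl i)
        | Sum.inl (Sum.inr k) => Sum.inr k
        | Sum.inr i => Sum.inl (Sum.inr i)
      left_inv := by rintro ((i|i)|k) <;> rfl
      right_inv := by rintro ((i|k)|i) <;> rfl } with he
  have hsub : (blk3 Luu Luz Ruᵀ Luzᵀ Ldd Rzᵀ Ru Rz 0).submatrix e e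
      = fromBlocks A B C Ldd := by
    ext x y
    rcases x with (i|i)|k <;> rcases y with (j|j)|l <;>
      simp [blk3, he, hA, hB, hC, Matrix.submatrix_apply, Matrix.fromBlocks_apply₁₁,
        Matrix.fromBlocks_apply₁₂, Matrix.fromBlocks_apply₂₁, Matrix.fromBlocks_apply₂₂,
        Matrix.fromRows_apply_inl, Matrix.fromRows_apply_inr,
        Matrix.fromCols_apply_inl, Matrix.fromCols_apply_inr]
  have hdetK : (blk3 Luu Luz Ruᵀ Luzᵀ Ldd Rzᵀ Ru Rz 0).det
      = A.det * (Ldd - C * ⅟A * B).det := by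
    rw [← Matrix.det_submatrix_equiv_self e, hsub, Matrix.det_fromBlocks₁₁]
  have hinvA : ⅟A = Ainv := invOf_eq_right_inv hmul
  have hSchur : Ldd - C * ⅟A * B
      = Ldd + Rzᵀ * (Ruᵀ)⁻¹ * Luu * Ru⁻¹ * Rz - Rzᵀ * (Ruᵀ)⁻¹ * Luz - Luzᵀ * Ru⁻¹ * Rz := by
    rw [hinvA, hAi, hB, hC, Matrix.fromCols_mul_fromBlocks, Matrix.fromCols_mul_fromRows]
    simp only [Matrix.mul_zero, zero_add, Matrix.mul_neg, Matrix.mul_assoc, Matrix.add_mul, Matrix.neg_mul]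
    abel
  rw [Matrix.isUnit_iff_isUnit_det, hdetK, hSchur, isUnit_iff_ne_zero, mul_ne_zero_iff,
    ← isUnit_iff_ne_zero (a := (Ldd + Rzᵀ * (Ruᵀ)⁻¹ * Luu * Ru⁻¹ * Rz - Rzᵀ * (Ruᵀ)⁻¹ * Luz - Luzᵀ * Ru⁻¹ * Rz).det),
    ← Matrix.isUnit_iff_isUnit_det]
  have hAdet : A.det ≠ 0 := by
    have := (isUnit_of_invertible A).map Matrix.detMonoidHom
    simpa [isUnit_iff_ne_zero] using this
  constructor
  · exact fun h => h.2
  · exact fun h => ⟨hAdet, h⟩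
end
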